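/- arXiv:2603.23188 — 8 statements merged into one kernel-verified Lean document; each statement's English description precedes it below -/
import Mathlib

section
/- For quadratic polynomials p and q over ℂ, the discriminant of the polynomial bracket [p,q] = p'q - pq' equals 4 times the resultant of p and q, where for p(x)=p₂x²+p₁x+p₀ we set Discr(p)=p₁²-4p₀p₂ and Res(p,q)=(p₂q₀-p₀q₂)²+(p₂q₁-p₁q₂)(p₀q₁-p₁q₀). -/
open Polynomial

/-- The polynomial bracket `[p,q] = p'q - pq'`. -/
noncomputable def pbr (p q : ℂ[X]) : ℂ[X] := derivative p * q - p * derivative q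

/-- `Discr(p) = p₁² - 4 p₀ p₂` for `p = p₂x² + p₁x + p₀`. -/
noncomputable def pdiscr (p : ℂ[X]) : ℂ := (p.coeff 1) ^ 2 - 4 * p.coeff 0 * p.coeff 2

/-- `Res(p,q) = (p₂q₀ - p₀q₂)² + (p₂q₁ - p₁q₂)(p₀q₁ - p₁q₀)`. -/
noncomputable def pres (p q : ℂ[X]) : ℂ :=
  (p.coeff 2 * q.coeff 0 - p.coeff 0 * q.coeff 2) ^ 2 +
    (p.coeff 2 * q.coeff 1 - p.coeff 1 * q.coeff 2) *
      (p.coeff 0 * q.coeff 1 - p.coeff 1 * q.coeff 0)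

theorem discr_pbr_eq_four_res (p q : ℂ[X]) (hp : p.degree ≤ 2) (hq : q.degree ≤ 2) :
    pdiscr (pbr p q) = 4 * pres p q := by
  have hp3 : p.coeff 3 = 0 := coeff_eq_zero_of_degree_lt (lt_of_le_of_lt hp (by norm_num))
  have hq3 : q.coeff 3 = 0 := coeff_eq_zero_of_degree_lt (lt_of_le_of_lt hq (by norm_num))
  have h0 : (pbr p q).coeff 0 = p.coeff 1 * q.coeff 0 - p.coeff 0 * q.coeff 1 := by
    simp [pbr, coeff_mul, Finset.Nat.sum_antidiagonal_eq_sum_range_succ_mk,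
      coeff_derivative, Finset.sum_range_succ]
  have h1 : (pbr p q).coeff 1 =
      2 * p.coeff 2 * q.coeff 0 - 2 * p.coeff 0 * q.coeff 2 := by
    simp [pbr, coeff_mul, Finset.Nat.sum_antidiagonal_eq_sum_range_succ_mk,
      coeff_derivative, Finset.sum_range_succ]
    ring
  have h2 : (pbr p q).coeff 2 = p.coeff 2 * q.coeff 1 - p.coeff 1 * q.coeff 2 := by
    simp [pbr, coeff_mul, Finset.Nat.sum_antidiagonal_eq_sum_range_succ_mk,
      coeff_derivative, Finset.sum_range_succ, hp3, hq3]
    ring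
  simp only [pdiscr, pres, h0, h1, h2]
  ring
end

section
/- Let p,q,r be complex polynomials of degree ≤ 2 and set p̂=[q,r], q̂=[r,p], r̂=[p,q] where [u,v]=u'v-uv'. Then [p̂,q̂] = -2Δ(p,q,r)·r, [q̂,r̂] = -2Δ(p,q,r)·p, and [r̂,p̂] = -2Δ(p,q,r)·q, where Δ(p,q,r) is the determinant of the 3×3 matrix of coefficients of p,q,r. -/
open Polynomial

/-- `Δ(p,q,r)`: determinant of the 3×3 matrix of coefficients of `p, q, r`. -/
noncomputable def pdelta (p q r : ℂ[X]) : ℂ :=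
  Matrix.det !![p.coeff 0, q.coeff 0, r.coeff 0;
                p.coeff 1, q.coeff 1, r.coeff 1;
                p.coeff 2, q.coeff 2, r.coeff 2]

lemma eq_quad (p : ℂ[X]) (hp : p.degree ≤ 2) :
    p = C (p.coeff 2) * X ^ 2 + C (p.coeff 1) * X + C (p.coeff 0) := by
  ext n
  simp only [coeff_add, coeff_C_mul, coeff_X_pow, coeff_X, coeff_C]
  match n with
  | 0 => simp
  | 1 => simp
  | 2 => simp
  | (k + 3) =>
    rw [coeff_eq_zero_of_degree_lt (lt_of_le_of_lt hp (by exact_mod_cast by omega))]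
    simp

lemma C_two : (C (2:ℂ) : ℂ[X]) = 2 := map_ofNat C 2

lemma pbr_quad (a2 a1 a0 b2 b1 b0 : ℂ) :
    pbr (C a2 * X ^ 2 + C a1 * X + C a0) (C b2 * X ^ 2 + C b1 * X + C b0) =
      C (a2 * b1 - a1 * b2) * X ^ 2 + C (2 * (a2 * b0 - a0 * b2)) * X
        + C (a1 * b0 - a0 * b1) := by
  simp only [pbr, derivative_add, derivative_mul, derivative_C, derivative_X,
    derivative_X_pow, map_mul, map_sub, map_add, map_ofNat, C_two, C_eq_natCast]
  push_cast
  ring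

set_option maxHeartbeats 1000000 in
theorem pbr_hat_identities (p q r : ℂ[X])
    (hp : p.degree ≤ 2) (hq : q.degree ≤ 2) (hr : r.degree ≤ 2) :
    pbr (pbr q r) (pbr r p) = C (-2 * pdelta p q r) * r ∧
    pbr (pbr r p) (pbr p q) = C (-2 * pdelta p q r) * p ∧
    pbr (pbr p q) (pbr q r) = C (-2 * pdelta p q r) * q := by
  have hD : pdelta p q r =
      p.coeff 0 * q.coeff 1 * r.coeff 2 - p.coeff 0 * q.coeff 2 * r.coeff 1 -
        q.coeff 0 * p.coeff 1 * r.coeff 2 + q.coeff 0 * p.coeff 2 * r.coeff 1 +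
        r.coeff 0 * p.coeff 1 * q.coeff 2 - r.coeff 0 * p.coeff 2 * q.coeff 1 := by
    simp [pdelta, Matrix.det_fin_three]
    ring
  set a0 := p.coeff 0
  set a1 := p.coeff 1
  set a2 := p.coeff 2
  set b0 := q.coeff 0
  set b1 := q.coeff 1
  set b2 := q.coeff 2
  set c0 := r.coeff 0
  set c1 := r.coeff 1
  set c2 := r.coeff 2
  have hP := eq_quad p hp
  have hQ := eq_quad q hq
  have hR := eq_quad r hr
  refine ⟨?_, ?_, ?_⟩ <;>
  · rw [hD, hP, hQ, hR, pbr_quad, pbr_quad, pbr_quad]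
    simp only [map_mul, map_add, map_sub, map_neg, map_ofNat]
    ring
end

section
/- Let p,q,r be complex polynomials of degree ≤ 2 and set p̂=[q,r], q̂=[r,p], r̂=[p,q]. Then Δ(p̂,q̂,r̂) = -2·Δ(p,q,r)², where Δ denotes the determinant of the coefficient matrix. -/
open Polynomial

lemma pbr_coeff0 (p q : ℂ[X]) :
    (pbr p q).coeff 0 = p.coeff 1 * q.coeff 0 - p.coeff 0 * q.coeff 1 := by
  simp [pbr, coeff_mul, Finset.Nat.sum_antidiagonal_eq_sum_range_succ_mk,
    coeff_derivative]

lemma pbr_coeff1 (p q : ℂ[X]) :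
    (pbr p q).coeff 1 = 2 * (p.coeff 2 * q.coeff 0 - p.coeff 0 * q.coeff 2) := by
  simp [pbr, coeff_mul, Finset.Nat.sum_antidiagonal_eq_sum_range_succ_mk,
    Finset.sum_range_succ, coeff_derivative]
  ring

lemma pbr_coeff2 (p q : ℂ[X]) (hp : p.coeff 3 = 0) (hq : q.coeff 3 = 0) :
    (pbr p q).coeff 2 = p.coeff 2 * q.coeff 1 - p.coeff 1 * q.coeff 2 := by
  simp [pbr, coeff_mul, Finset.Nat.sum_antidiagonal_eq_sum_range_succ_mk,
    Finset.sum_range_succ, coeff_derivative, hp, hq]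
  ring

lemma det3 (a b c d e f g h i : ℂ) :
    Matrix.det !![a, b, c; d, e, f; g, h, i] =
      a*e*i - a*f*h - b*d*i + b*f*g + c*d*h - c*e*g := by
  simp [Matrix.det_fin_three]

set_option maxHeartbeats 1000000 in
theorem pdelta_hat (p q r : ℂ[X])
    (hp : p.degree ≤ 2) (hq : q.degree ≤ 2) (hr : r.degree ≤ 2) :
    pdelta (pbr q r) (pbr r p) (pbr p q) = -2 * (pdelta p q r) ^ 2 := by
  have h3 : (2 : WithBot ℕ) < 3 := by norm_num
  have hp3 : p.coeff 3 = 0 := coeff_eq_zero_of_degree_lt (hp.trans_lt h3)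
  have hq3 : q.coeff 3 = 0 := coeff_eq_zero_of_degree_lt (hq.trans_lt h3)
  have hr3 : r.coeff 3 = 0 := coeff_eq_zero_of_degree_lt (hr.trans_lt h3)
  rw [pdelta, pdelta, det3, det3,
    pbr_coeff0, pbr_coeff0, pbr_coeff0, pbr_coeff1, pbr_coeff1, pbr_coeff1,
    pbr_coeff2 _ _ hq3 hr3, pbr_coeff2 _ _ hr3 hp3, pbr_coeff2 _ _ hp3 hq3]
  ring
end

section
/- Let p(x) = (x-e₁)(x-e₂) and q(x) = (x-h₁)(x-h₂) with Re e₁ > 0, Re e₂ > 0, Re h₁ < 0, Re h₂ < 0. Then the polynomial [p,q] = p'q - pq' is a quadratic with nonzero leading coefficient and has exactly one root with positive real part and one root with negative real part. -/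
open Polynomial

/-- Half-plane separation lemma. -/
lemma lemA (h₁ h₂ z : ℂ) (hh₁ : h₁.re < 0) (hh₂ : h₂.re < 0) (hz : 0 ≤ z.re) :
    0 < ((starRingEnd ℂ) (-(h₁ + (starRingEnd ℂ) h₂)) *
      ((z - h₁) * (starRingEnd ℂ) (z - h₂))).re := by
  simp only [Complex.mul_re, Complex.mul_im, Complex.sub_re, Complex.sub_im, Complex.neg_re,
    Complex.neg_im, Complex.add_re, Complex.add_im, Complex.conj_re, Complex.conj_im]
  nlinarith [mul_nonneg hz (sq_nonneg (h₂.im - h₁.im)),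
    mul_nonneg (neg_nonneg.2 hh₂.le) (sq_nonneg (z.im - h₁.im)),
    mul_nonneg (neg_nonneg.2 hh₁.le) (sq_nonneg (z.im - h₂.im)),
    mul_pos (mul_pos (show (0:ℝ) < -(h₁.re + h₂.re) by linarith)
      (show (0:ℝ) < z.re - h₁.re by linarith)) (show (0:ℝ) < z.re - h₂.re by linarith)]

lemma lemA' (e₁ e₂ z : ℂ) (he₁ : 0 < e₁.re) (he₂ : 0 < e₂.re) (hz : z.re ≤ 0) :
    0 < ((starRingEnd ℂ) (e₁ + (starRingEnd ℂ) e₂) *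
      ((z - e₁) * (starRingEnd ℂ) (z - e₂))).re := by
  have := lemA (-e₁) (-e₂) (-z) (by simpa using he₁) (by simpa using he₂) (by simpa using hz)
  have heq : ((starRingEnd ℂ) (-(-e₁ + (starRingEnd ℂ) (-e₂))) *
      ((-z - -e₁) * (starRingEnd ℂ) (-z - -e₂))) =
      ((starRingEnd ℂ) (e₁ + (starRingEnd ℂ) e₂) *
      ((z - e₁) * (starRingEnd ℂ) (z - e₂))) := by
    simp only [map_neg, map_add, map_sub, Complex.conj_conj]
    ring
  rwa [heq] at this

lemma no_pair (l h₁ h₂ z₁ z₂ : ℂ)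
    (H1 : 0 < ((starRingEnd ℂ) l * ((z₁ - h₁) * (starRingEnd ℂ) (z₁ - h₂))).re)
    (H2 : 0 < ((starRingEnd ℂ) l * ((z₂ - h₁) * (starRingEnd ℂ) (z₂ - h₂))).re)
    (hd₁ : z₁ ≠ h₂) (hd₂ : z₂ ≠ h₂)
    (heq : (z₁ - h₁) * (z₂ - h₂) + (z₁ - h₂) * (z₂ - h₁) = 0) : False := by
  have key : ((starRingEnd ℂ) l * ((z₁ - h₁) * (starRingEnd ℂ) (z₁ - h₂))) *
        ((z₂ - h₂) * (starRingEnd ℂ) (z₂ - h₂)) +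
      ((starRingEnd ℂ) l * ((z₂ - h₁) * (starRingEnd ℂ) (z₂ - h₂))) *
        ((z₁ - h₂) * (starRingEnd ℂ) (z₁ - h₂)) = 0 := by
    linear_combination ((starRingEnd ℂ) l * ((starRingEnd ℂ) (z₁ - h₂) *
      (starRingEnd ℂ) (z₂ - h₂))) * heq
  rw [Complex.mul_conj, Complex.mul_conj] at key
  have hre := congrArg Complex.re key
  simp only [Complex.add_re, Complex.zero_re] at hre
  rw [mul_comm _ ((Complex.normSq (z₂ - h₂) : ℂ)), mul_comm _ ((Complex.normSq (z₁ - h₂) : ℂ))]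
    at hre
  simp only [Complex.re_ofReal_mul] at hre
  have d₁ : 0 < Complex.normSq (z₁ - h₂) := Complex.normSq_pos.2 (sub_ne_zero.2 hd₁)
  have d₂ : 0 < Complex.normSq (z₂ - h₂) := Complex.normSq_pos.2 (sub_ne_zero.2 hd₂)
  nlinarith [mul_pos d₂ H1, mul_pos d₁ H2]

theorem pbr_root_split (e₁ e₂ h₁ h₂ : ℂ)
    (he₁ : 0 < e₁.re) (he₂ : 0 < e₂.re) (hh₁ : h₁.re < 0) (hh₂ : h₂.re < 0) :
    e₁ + e₂ - h₁ - h₂ ≠ 0 ∧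
    ∃ z₁ z₂ : ℂ, 0 < z₁.re ∧ z₂.re < 0 ∧
      pbr ((X - C e₁) * (X - C e₂)) ((X - C h₁) * (X - C h₂)) =
        C (e₁ + e₂ - h₁ - h₂) * (X - C z₁) * (X - C z₂) := by
  set a : ℂ := e₁ + e₂ - h₁ - h₂ with ha_def
  set b : ℂ := 2 * (h₁ * h₂ - e₁ * e₂) with hb_def
  set c : ℂ := e₁ * e₂ * (h₁ + h₂) - h₁ * h₂ * (e₁ + e₂) with hc_def
  have haRe : 0 < a.re := by rw [ha_def]; simp only [Complex.sub_re, Complex.add_re]; linarith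
  have ha0 : a ≠ 0 := fun h => by rw [h] at haRe; simp at haRe
  refine ⟨ha0, ?_⟩
  obtain ⟨w, hw⟩ : ∃ w : ℂ, w ^ 2 = b ^ 2 - 4 * a * c :=
    IsAlgClosed.exists_pow_nat_eq (k := ℂ) _ (hn := by norm_num) (n := 2)
  set z₁ : ℂ := (-b + w) / (2 * a) with hz₁_def
  set z₂ : ℂ := (-b - w) / (2 * a) with hz₂_def
  have hsumA : a * (z₁ + z₂) = -b := by
    rw [hz₁_def, hz₂_def]; field_simp; ring
  have hprodA : a * (z₁ * z₂) = c := by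
    rw [hz₁_def, hz₂_def]; field_simp; linear_combination -hw
  have Hsum : (z₁ - h₁) * (z₂ - h₂) + (z₁ - h₂) * (z₂ - h₁) = 0 := by
    have h' : a * ((z₁ - h₁) * (z₂ - h₂) + (z₁ - h₂) * (z₂ - h₁)) = 0 := by
      linear_combination 2 * hprodA - (h₁ + h₂) * hsumA
    exact (mul_eq_zero.1 h').resolve_left ha0
  have Esum : (z₁ - e₁) * (z₂ - e₂) + (z₁ - e₂) * (z₂ - e₁) = 0 := by
    have h' : a * ((z₁ - e₁) * (z₂ - e₂) + (z₁ - e₂) * (z₂ - e₁)) = 0 := by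
      linear_combination 2 * hprodA - (e₁ + e₂) * hsumA
    exact (mul_eq_zero.1 h').resolve_left ha0
  -- not both (weakly) in the right half-plane
  have notRR : ¬ (0 ≤ z₁.re ∧ 0 ≤ z₂.re) := by
    rintro ⟨hz1, hz2⟩
    exact no_pair (-(h₁ + (starRingEnd ℂ) h₂)) h₁ h₂ z₁ z₂
      (lemA h₁ h₂ z₁ hh₁ hh₂ hz1) (lemA h₁ h₂ z₂ hh₁ hh₂ hz2)
      (fun h => by rw [h] at hz1; linarith)
      (fun h => by rw [h] at hz2; linarith) Hsum
  -- not both (weakly) in the left half-plane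
  have notLL : ¬ (z₁.re ≤ 0 ∧ z₂.re ≤ 0) := by
    rintro ⟨hz1, hz2⟩
    exact no_pair (e₁ + (starRingEnd ℂ) e₂) e₁ e₂ z₁ z₂
      (lemA' e₁ e₂ z₁ he₁ he₂ hz1) (lemA' e₁ e₂ z₂ he₁ he₂ hz2)
      (fun h => by rw [h] at hz1; linarith)
      (fun h => by rw [h] at hz2; linarith) Esum
  -- the factorization
  have fact : pbr ((X - C e₁) * (X - C e₂)) ((X - C h₁) * (X - C h₂)) =
      C a * (X - C z₁) * (X - C z₂) := by
    have CA : (C a : ℂ[X]) = C e₁ + C e₂ - C h₁ - C h₂ := by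
      rw [ha_def]; simp only [map_add, map_sub]
    have CS : (C a : ℂ[X]) * (C z₁ + C z₂) = 2 * (C h₁ * C h₂ - C e₁ * C e₂) * (-1) := by
      rw [← C_add, ← C_mul, hsumA, hb_def]
      simp only [map_neg, map_mul, map_sub, map_ofNat]
      ring
    have CP : (C a : ℂ[X]) * (C z₁ * C z₂) =
        C e₁ * C e₂ * (C h₁ + C h₂) - C h₁ * C h₂ * (C e₁ + C e₂) := by
      rw [← C_mul, ← C_mul, hprodA, hc_def]
      simp only [map_mul, map_sub, map_add]
    simp only [pbr, derivative_mul, derivative_X_sub_C, one_mul, mul_one]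
    linear_combination -(X : ℂ[X]) ^ 2 * CA + (X : ℂ[X]) * CS - CP
  rcases lt_trichotomy z₁.re 0 with h1 | h1 | h1
  · rcases lt_trichotomy z₂.re 0 with h2 | h2 | h2
    · exact absurd ⟨h1.le, h2.le⟩ notLL
    · exact absurd ⟨h1.le, h2.le⟩ notLL
    · exact ⟨z₂, z₁, h2, h1, by rw [fact]; ring⟩
  · have h2 : 0 ≤ z₂.re := le_of_not_gt fun h2 => notLL ⟨h1.le, h2.le⟩
    exact absurd ⟨h1.ge, h2⟩ notRR
  · rcases lt_trichotomy z₂.re 0 with h2 | h2 | h2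
    · exact ⟨z₁, z₂, h1, h2, fact⟩
    · exact absurd ⟨h1.le, h2.ge⟩ notRR
    · exact absurd ⟨h1.le, h2.le⟩ notRR
end

section
/- Let p(x) = (x-e₁)(x-e₂) and q(x) = (x-h₁)(x-h₂) with Re e₁, Re e₂ > 0 and Re h₁, Re h₂ < 0. Then the polynomial [p,q] = p'q - pq' has no root on the imaginary axis (in particular no purely imaginary root), and its leading coefficient e₁+e₂-h₁-h₂ is nonzero. -/
open Polynomial

theorem pbr_no_imaginary_root (e₁ e₂ h₁ h₂ : ℂ)
    (he₁ : 0 < e₁.re) (he₂ : 0 < e₂.re) (hh₁ : h₁.re < 0) (hh₂ : h₂.re < 0) :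
    (∀ z : ℂ, (pbr ((X - C e₁) * (X - C e₂)) ((X - C h₁) * (X - C h₂))).IsRoot z →
      z.re ≠ 0) ∧ e₁ + e₂ - h₁ - h₂ ≠ 0 := by
  constructor
  · intro z hz h0
    have ha : z - e₁ ≠ 0 := fun h => by
      have := congrArg Complex.re h; simp [Complex.sub_re, h0] at this; linarith
    have hb : z - e₂ ≠ 0 := fun h => by
      have := congrArg Complex.re h; simp [Complex.sub_re, h0] at this; linarith
    have hc : z - h₁ ≠ 0 := fun h => by
      have := congrArg Complex.re h; simp [Complex.sub_re, h0] at this; linarith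
    have hd : z - h₂ ≠ 0 := fun h => by
      have := congrArg Complex.re h; simp [Complex.sub_re, h0] at this; linarith
    have hz' : ((z - e₁) + (z - e₂)) * ((z - h₁) * (z - h₂))
        - (z - e₁) * (z - e₂) * ((z - h₁) + (z - h₂)) = 0 := by
      have h := hz
      simp only [pbr, IsRoot, eval_sub, eval_mul, eval_add, derivative_mul,
        derivative_sub, derivative_X, derivative_C, eval_X, eval_C, eval_one,
        sub_zero, one_mul, mul_one] at h
      linear_combination h
    have key : (z - e₁)⁻¹ + (z - e₂)⁻¹ = (z - h₁)⁻¹ + (z - h₂)⁻¹ := by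
      field_simp
      linear_combination hz'
    have := congrArg Complex.re key
    simp only [Complex.add_re, Complex.inv_re] at this
    have na : 0 < Complex.normSq (z - e₁) := Complex.normSq_pos.mpr ha
    have nb : 0 < Complex.normSq (z - e₂) := Complex.normSq_pos.mpr hb
    have nc : 0 < Complex.normSq (z - h₁) := Complex.normSq_pos.mpr hc
    have nd : 0 < Complex.normSq (z - h₂) := Complex.normSq_pos.mpr hd
    have ra : (z - e₁).re = -e₁.re := by simp [Complex.sub_re, h0]
    have rb : (z - e₂).re = -e₂.re := by simp [Complex.sub_re, h0]
    have rc : (z - h₁).re = -h₁.re := by simp [Complex.sub_re, h0]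
    have rd : (z - h₂).re = -h₂.re := by simp [Complex.sub_re, h0]
    rw [ra, rb, rc, rd] at this
    have l1 : -e₁.re / Complex.normSq (z - e₁) < 0 := div_neg_of_neg_of_pos (by linarith) na
    have l2 : -e₂.re / Complex.normSq (z - e₂) < 0 := div_neg_of_neg_of_pos (by linarith) nb
    have l3 : 0 < -h₁.re / Complex.normSq (z - h₁) := div_pos (by linarith) nc
    have l4 : 0 < -h₂.re / Complex.normSq (z - h₂) := div_pos (by linarith) nd
    linarith
  · intro h
    have := congrArg Complex.re h
    simp [Complex.sub_re, Complex.add_re] at this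
    linarith
end

section
/- Let e₁, e₂ be complex numbers with positive real part and define sequences by a₀=e₁, b₀=e₂, a_{n+1} = (a_n+b_n)/2, b_{n+1} = 2a_nb_n/(a_n+b_n) (arithmetic-harmonic mean iteration). Then all a_n, b_n have positive real part, and the sequences a_n and b_n converge to a common limit. -/
open Filter

private lemma hm_re_pos (z w : ℂ) (hz : 0 < z.re) (hw : 0 < w.re) :
    0 < (2 * z * w / (z + w)).re := by
  have hzw : z + w ≠ 0 := by
    intro h
    have h2 : (z + w).re = 0 := by rw [h]; simp
    rw [Complex.add_re] at h2
    linarith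
  have hQ : 0 < Complex.normSq (z + w) := Complex.normSq_pos.2 hzw
  rw [Complex.div_re, ← add_div, lt_div_iff₀ hQ]
  simp only [Complex.mul_re, Complex.mul_im, Complex.add_re, Complex.add_im,
    Complex.re_ofNat, Complex.im_ofNat]
  nlinarith [mul_pos (mul_pos hz hz) hw, mul_pos (mul_pos hw hw) hz,
    mul_nonneg hw.le (sq_nonneg z.im), mul_nonneg hz.le (sq_nonneg w.im)]

theorem ahm_converges (e₁ e₂ : ℂ) (he₁ : 0 < e₁.re) (he₂ : 0 < e₂.re)
    (a b : ℕ → ℂ) (ha0 : a 0 = e₁) (hb0 : b 0 = e₂)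
    (ha : ∀ n, a (n + 1) = (a n + b n) / 2)
    (hb : ∀ n, b (n + 1) = 2 * a n * b n / (a n + b n)) :
    (∀ n, 0 < (a n).re ∧ 0 < (b n).re) ∧
    ∃ L : ℂ, Tendsto a atTop (nhds L) ∧ Tendsto b atTop (nhds L) := by
  -- positivity of real parts, by induction
  have hpos : ∀ n, 0 < (a n).re ∧ 0 < (b n).re := by
    intro n
    induction n with
    | zero => exact ⟨ha0 ▸ he₁, hb0 ▸ he₂⟩
    | succ n ih =>
      constructor
      · rw [ha n]
        have h2 : ((a n + b n) / 2).re = ((a n).re + (b n).re) / 2 := by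
          simp [Complex.div_re, Complex.add_re, Complex.normSq_apply]
        rw [h2]; linarith [ih.1, ih.2]
      · rw [hb n]; exact hm_re_pos _ _ ih.1 ih.2
  refine ⟨hpos, ?_⟩
  have hane : ∀ n, a n ≠ 0 := by
    intro n h
    have h2 := (hpos n).1
    rw [h] at h2; simp at h2
  have habne : ∀ n, a n + b n ≠ 0 := by
    intro n h
    have h2 : (a n + b n).re = 0 := by rw [h]; simp
    rw [Complex.add_re] at h2
    linarith [(hpos n).1, (hpos n).2]
  have he₁0 : e₁ ≠ 0 := fun h => by simp [h] at he₁
  have he₂0 : e₂ ≠ 0 := fun h => by simp [h] at he₂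
  -- a principal square root s of e₁ * e₂ with positive real part
  obtain ⟨t, ht⟩ := IsAlgClosed.exists_pow_nat_eq (e₁ * e₂) zero_lt_two
  have htre : t.re ≠ 0 := by
    intro h0
    have h1 : (t ^ 2).re = e₁.re * e₂.re - e₁.im * e₂.im := by
      rw [ht]; simp [Complex.mul_re]
    have h2 : (t ^ 2).im = e₁.re * e₂.im + e₁.im * e₂.re := by
      rw [ht]; simp [Complex.mul_im]
    have h3 : (t ^ 2).re = -(t.im ^ 2) := by simp [pow_two, Complex.mul_re, h0]
    have h4 : (t ^ 2).im = 0 := by simp [pow_two, Complex.mul_im, h0]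
    rw [h3] at h1; rw [h4] at h2
    have key1 : e₁.re * e₂.re ≤ e₁.im * e₂.im := by nlinarith [sq_nonneg t.im]
    have key2 : e₁.re * e₂.im = -(e₁.im * e₂.re) := by linarith
    have hy : 0 < e₁.im * e₂.im := lt_of_lt_of_le (mul_pos he₁ he₂) key1
    have hkey3 : e₁.im * (e₁.re * e₂.im) = -(e₁.im ^ 2 * e₂.re) := by
      rw [key2]; ring
    nlinarith [mul_pos he₁ hy, mul_nonneg (sq_nonneg e₁.im) he₂.le]
  obtain ⟨s, hs_def⟩ : ∃ s : ℂ, s = if 0 < t.re then t else -t := ⟨_, rfl⟩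
  have hs2 : s ^ 2 = e₁ * e₂ := by
    rw [hs_def]; split <;> simpa [neg_pow] using ht
  have hsre : 0 < s.re := by
    rw [hs_def]; split
    · assumption
    · rename_i h
      rcases lt_trichotomy t.re 0 with h' | h' | h'
      · simpa using h'
      · exact absurd h' htre
      · exact absurd h' h
  have hs0 : s ≠ 0 := fun h => by simp [h] at hsre
  -- Re (e₁ * conj s) > 0
  have hkey : 0 < e₁.re * s.re + e₁.im * s.im := by
    have hA : 0 < (s ^ 2 * (starRingEnd ℂ) e₁).re := by
      have h2 : s ^ 2 * (starRingEnd ℂ) e₁ = (Complex.normSq e₁ : ℂ) * e₂ := by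
        rw [hs2, mul_comm e₁ e₂, mul_assoc, Complex.mul_conj, mul_comm]
      rw [h2]
      have h3 : ((Complex.normSq e₁ : ℂ) * e₂).re = Complex.normSq e₁ * e₂.re := by
        rw [Complex.mul_re, Complex.ofReal_re, Complex.ofReal_im]
        ring
      rw [h3]
      exact mul_pos (Complex.normSq_pos.2 he₁0) he₂
    have h4 : (s ^ 2 * (starRingEnd ℂ) e₁).re
        = (s.re ^ 2 - s.im ^ 2) * e₁.re + 2 * s.re * s.im * e₁.im := by
      simp only [pow_two, Complex.mul_re, Complex.mul_im, Complex.conj_re,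
        Complex.conj_im]
      ring
    rw [h4] at hA
    nlinarith [mul_pos he₁ (mul_pos hsre hsre), mul_nonneg he₁.le (sq_nonneg s.im),
      mul_pos hsre hsre]
  -- the parameter d with ‖d‖ < 1
  have hes : e₁ + s ≠ 0 := by
    intro h
    have h2 : (e₁ + s).re = 0 := by rw [h]; simp
    rw [Complex.add_re] at h2
    linarith
  obtain ⟨d, hd_def⟩ : ∃ d : ℂ, d = (e₁ - s) / (e₁ + s) := ⟨_, rfl⟩
  have hd : ‖d‖ < 1 := by
    rw [hd_def, norm_div, div_lt_one (norm_pos_iff.2 hes)]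
    have h5 : Complex.normSq (e₁ - s) < Complex.normSq (e₁ + s) := by
      simp only [Complex.normSq_apply, Complex.add_re, Complex.add_im, Complex.sub_re,
        Complex.sub_im]
      nlinarith
    calc ‖e₁ - s‖ = Real.sqrt (Complex.normSq (e₁ - s)) := by
          rw [Complex.norm_def]
      _ < Real.sqrt (Complex.normSq (e₁ + s)) :=
          Real.sqrt_lt_sqrt (Complex.normSq_nonneg _) h5
      _ = ‖e₁ + s‖ := by rw [Complex.norm_def]
  obtain ⟨c, hc_def⟩ : ∃ c : ℕ → ℂ, c = fun n => d ^ (2 ^ n) := ⟨_, rfl⟩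
  have hcn : ∀ n, ‖c n‖ < 1 := by
    intro n
    rw [hc_def]
    dsimp only
    rw [norm_pow]
    calc ‖d‖ ^ 2 ^ n ≤ ‖d‖ ^ 1 :=
          pow_le_pow_of_le_one (norm_nonneg _) hd.le Nat.one_le_two_pow
      _ = ‖d‖ := pow_one _
      _ < 1 := hd
  have hc1 : ∀ n, (1 : ℂ) - c n ≠ 0 := by
    intro n h
    have h' := hcn n
    rw [show c n = 1 by linear_combination -h] at h'
    simp at h'
  have hc2 : ∀ n, (1 : ℂ) + c n ≠ 0 := by
    intro n h
    have h' := hcn n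
    rw [show c n = -1 by linear_combination h] at h'
    simp at h'
  have hc0 : c 0 = d := by rw [hc_def]; norm_num
  -- explicit formula
  have hform : ∀ n, a n = s * (1 + c n) / (1 - c n) ∧ b n = s * (1 - c n) / (1 + c n) := by
    intro n
    induction n with
    | zero =>
      have h1d : (1 : ℂ) - d ≠ 0 := by rw [← hc0]; exact hc1 0
      have h2d : (1 : ℂ) + d ≠ 0 := by rw [← hc0]; exact hc2 0
      constructor
      · rw [ha0, hc0, eq_div_iff h1d, hd_def]
        field_simp
        ring
      · rw [hb0, hc0, eq_div_iff h2d, hd_def]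
        field_simp
        linear_combination (-2) * hs2
    | succ n ih =>
      have hcs : c (n + 1) = c n ^ 2 := by
        rw [hc_def]; dsimp only; rw [← pow_mul, pow_succ]
      have hsum : a n + b n = 2 * s * (1 + c (n + 1)) / ((1 - c n) * (1 + c n)) := by
        rw [ih.1, ih.2, hcs, div_add_div _ _ (hc1 n) (hc2 n)]
        congr 1
        ring
      have hprod : a n * b n = s ^ 2 := by
        rw [ih.1, ih.2, div_mul_div_comm, div_eq_iff (mul_ne_zero (hc1 n) (hc2 n))]
        ring
      have h1mc : (1 - c n) * (1 + c n) = 1 - c (n + 1) := by rw [hcs]; ring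
      constructor
      · rw [ha n, hsum, h1mc]
        ring
      · rw [hb n, hsum, h1mc, mul_assoc, hprod]
        rw [div_div_eq_mul_div,
          div_eq_div_iff (mul_ne_zero (mul_ne_zero two_ne_zero hs0) (hc2 (n + 1)))
            (hc2 (n + 1))]
        ring
  -- limits
  have hcz : Tendsto c atTop (nhds 0) := by
    rw [hc_def]
    exact (tendsto_pow_atTop_nhds_zero_of_norm_lt_one hd).comp
      (tendsto_pow_atTop_atTop_of_one_lt one_lt_two)
  have hta : Tendsto a atTop (nhds s) := by
    have h6 : Tendsto (fun n => s * (1 + c n) / (1 - c n)) atTop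
        (nhds (s * (1 + 0) / (1 - 0))) :=
      Tendsto.div (tendsto_const_nhds.mul (tendsto_const_nhds.add hcz))
        (tendsto_const_nhds.sub hcz) (by norm_num)
    simp only [add_zero, sub_zero, mul_one, div_one] at h6
    exact Tendsto.congr (fun n => ((hform n).1).symm) h6
  have htb : Tendsto b atTop (nhds s) := by
    have h6 : Tendsto (fun n => s * (1 - c n) / (1 + c n)) atTop
        (nhds (s * (1 - 0) / (1 + 0))) :=
      Tendsto.div (tendsto_const_nhds.mul (tendsto_const_nhds.sub hcz))
        (tendsto_const_nhds.add hcz) (by norm_num)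
    simp only [add_zero, sub_zero, mul_one, div_one] at h6
    exact Tendsto.congr (fun n => ((hform n).2).symm) h6
  exact ⟨s, hta, htb⟩
end

section
/- Let t ∈ ℂ with Re t > 0. Then for all n ≥ 0, the pair obtained after n steps of the arithmetic-harmonic mean iteration started from (s·tanh(t), s·coth(t)) (for fixed s ∈ ℂ) equals, up to transposition, (s·tanh(2ⁿt), s·coth(2ⁿt)). In particular, since Re t > 0, both components tend to s as n → ∞. -/
open Filter Complex

/-- Hyperbolic cotangent on `ℂ`. -/
noncomputable def ccoth (z : ℂ) : ℂ := Complex.cosh z / Complex.sinh z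

private lemma abs_exp_aux {z : ℂ} (hz : 0 < z.re)
    (h : ‖Complex.exp z‖ = ‖Complex.exp (-z)‖) : False := by
  rw [Complex.norm_exp, Complex.norm_exp, Complex.neg_re] at h
  have h2 : z.re = -z.re := Real.exp_injective h
  linarith

private lemma sinh_ne_zero' {z : ℂ} (hz : 0 < z.re) : Complex.sinh z ≠ 0 := by
  intro h
  have h1 : Complex.exp z = Complex.exp (-z) := by
    simp only [Complex.sinh] at h
    field_simp at h
    linear_combination h
  exact abs_exp_aux hz (by rw [h1])

private lemma cosh_ne_zero' {z : ℂ} (hz : 0 < z.re) : Complex.cosh z ≠ 0 := by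
  intro h
  have h1 : Complex.exp z = -Complex.exp (-z) := by
    simp only [Complex.cosh] at h
    field_simp at h
    linear_combination h
  exact abs_exp_aux hz (by rw [h1, norm_neg])

private lemma sum_eq {z : ℂ} (hz : 0 < z.re) (s : ℂ) :
    (s * Complex.tanh z + s * ccoth z) / 2 = s * ccoth (2 * z) := by
  have h2z : (0:ℝ) < (2 * z).re := by
    rw [show (2:ℂ) * z = (((2:ℝ)):ℂ) * z by norm_num, Complex.re_ofReal_mul]; linarith
  rw [Complex.tanh_eq_sinh_div_cosh, ccoth, ccoth, Complex.sinh_two_mul,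
    Complex.cosh_two_mul]
  field_simp [sinh_ne_zero' hz, cosh_ne_zero' hz]
  ring

private lemma prod_eq {z : ℂ} (hz : 0 < z.re) (s : ℂ) :
    2 * (s * Complex.tanh z) * (s * ccoth z) / (s * Complex.tanh z + s * ccoth z)
      = s * Complex.tanh (2 * z) := by
  rcases eq_or_ne s 0 with rfl | hs
  · simp
  have hsz := sinh_ne_zero' hz
  have hcz := cosh_ne_zero' hz
  have h2z : (0:ℝ) < (2 * z).re := by
    rw [show (2:ℂ) * z = (((2:ℝ)):ℂ) * z by norm_num, Complex.re_ofReal_mul]; linarith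
  have hc2 := cosh_ne_zero' h2z
  have hden : s * Complex.tanh z + s * ccoth z ≠ 0 := by
    rw [Complex.tanh_eq_sinh_div_cosh, ccoth]
    have heq : Complex.sinh z / Complex.cosh z + Complex.cosh z / Complex.sinh z
        = Complex.cosh (2 * z) / (Complex.sinh z * Complex.cosh z) := by
      rw [Complex.cosh_two_mul]; field_simp; ring
    rw [← mul_add, heq]
    exact mul_ne_zero hs (div_ne_zero hc2 (mul_ne_zero hsz hcz))
  have hc2' : Complex.cosh z ^ 2 + Complex.sinh z ^ 2 ≠ 0 := by
    rw [← Complex.cosh_two_mul]; exact hc2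
  rw [div_eq_iff hden, Complex.tanh_eq_sinh_div_cosh, Complex.tanh_eq_sinh_div_cosh,
    ccoth, Complex.sinh_two_mul, Complex.cosh_two_mul]
  field_simp
  ring

private lemma exp_neg_mul_self (z : ℂ) : Complex.exp (-z) * Complex.exp z = 1 := by
  rw [← Complex.exp_add]; simp

private lemma one_add_w {z : ℂ} :
    (1 : ℂ) + Complex.exp (-(2 * z)) = Complex.exp (-z) * (2 * Complex.cosh z) := by
  simp only [Complex.cosh]
  rw [show -(2*z) = -z + -z by ring, Complex.exp_add]
  have h1 := exp_neg_mul_self z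
  linear_combination -h1

private lemma one_sub_w {z : ℂ} :
    (1 : ℂ) - Complex.exp (-(2 * z)) = Complex.exp (-z) * (2 * Complex.sinh z) := by
  simp only [Complex.sinh]
  rw [show -(2*z) = -z + -z by ring, Complex.exp_add]
  have h1 := exp_neg_mul_self z
  linear_combination -h1

private lemma tanh_eq_w {z : ℂ} (hz : 0 < z.re) :
    Complex.tanh z = (1 - Complex.exp (-(2 * z))) / (1 + Complex.exp (-(2 * z))) := by
  have hcz := cosh_ne_zero' hz
  rw [Complex.tanh_eq_sinh_div_cosh, one_add_w, one_sub_w]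
  rw [mul_comm (Complex.exp (-z)) _, mul_comm (Complex.exp (-z)) _,
    mul_div_mul_right _ _ (Complex.exp_ne_zero (-z))]
  rw [mul_div_mul_left _ _ (two_ne_zero)]

private lemma ccoth_eq_w {z : ℂ} (hz : 0 < z.re) :
    ccoth z = (1 + Complex.exp (-(2 * z))) / (1 - Complex.exp (-(2 * z))) := by
  have hsz := sinh_ne_zero' hz
  rw [ccoth, one_add_w, one_sub_w]
  rw [mul_comm (Complex.exp (-z)) _, mul_comm (Complex.exp (-z)) _,
    mul_div_mul_right _ _ (Complex.exp_ne_zero (-z))]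
  rw [mul_div_mul_left _ _ (two_ne_zero)]

theorem ahm_tanh_coth (t : ℂ) (ht : 0 < t.re) (s : ℂ) (a b : ℕ → ℂ)
    (ha0 : a 0 = s * Complex.tanh t) (hb0 : b 0 = s * ccoth t)
    (ha : ∀ n, a (n + 1) = (a n + b n) / 2)
    (hb : ∀ n, b (n + 1) = 2 * a n * b n / (a n + b n)) :
    (∀ n : ℕ,
      (a n = s * Complex.tanh ((2 : ℂ) ^ n * t) ∧ b n = s * ccoth ((2 : ℂ) ^ n * t)) ∨
      (a n = s * ccoth ((2 : ℂ) ^ n * t) ∧ b n = s * Complex.tanh ((2 : ℂ) ^ n * t))) ∧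
    Tendsto a atTop (nhds s) ∧ Tendsto b atTop (nhds s) := by
  have hre : ∀ n : ℕ, 0 < ((2 : ℂ) ^ n * t).re := by
    intro n
    have h1 : ((2:ℂ)^n * t).re = (2:ℝ)^n * t.re := by
      rw [show ((2:ℂ)^n : ℂ) = (((2:ℝ)^n : ℝ) : ℂ) by push_cast; ring]
      exact Complex.re_ofReal_mul _ _
    rw [h1]; positivity
  have key : ∀ n : ℕ,
      (a n = s * Complex.tanh ((2 : ℂ) ^ n * t) ∧ b n = s * ccoth ((2 : ℂ) ^ n * t)) ∨
      (a n = s * ccoth ((2 : ℂ) ^ n * t) ∧ b n = s * Complex.tanh ((2 : ℂ) ^ n * t)) := by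
    intro n
    induction n with
    | zero => left; simpa using ⟨ha0, hb0⟩
    | succ n ih =>
      have hz := hre n
      have hpow : ((2:ℂ)^(n+1) * t) = 2 * ((2:ℂ)^n * t) := by ring
      right
      rcases ih with ⟨h1, h2⟩ | ⟨h1, h2⟩
      · constructor
        · rw [ha n, h1, h2, hpow]; exact sum_eq hz s
        · rw [hb n, h1, h2, hpow]; exact prod_eq hz s
      · constructor
        · rw [ha n, h1, h2, hpow, add_comm]; exact sum_eq hz s
        · rw [hb n, h1, h2, hpow,
            show 2 * (s * ccoth ((2:ℂ)^n * t)) * (s * Complex.tanh ((2:ℂ)^n * t))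
              = 2 * (s * Complex.tanh ((2:ℂ)^n * t)) * (s * ccoth ((2:ℂ)^n * t)) by ring,
            add_comm]
          exact prod_eq hz s
  refine ⟨key, ?_, ?_⟩ <;>
  · -- limits
    have hw0 : Tendsto (fun n : ℕ => Complex.exp (-(2 * ((2:ℂ)^n * t)))) atTop (nhds 0) := by
      rw [tendsto_zero_iff_norm_tendsto_zero]
      have h1 : Tendsto (fun n : ℕ => (2:ℝ)^n * (2 * t.re)) atTop atTop :=
        (tendsto_pow_atTop_atTop_of_one_lt one_lt_two).atTop_mul_const (by linarith)
      have h2 : Tendsto (fun n : ℕ => Real.exp (-((2:ℝ)^n * (2 * t.re)))) atTop (nhds 0) :=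
        Real.tendsto_exp_neg_atTop_nhds_zero.comp h1
      convert h2 using 2 with n
      rw [Complex.norm_exp]
      congr 1
      have : ((2:ℂ)^n * t) = (((2:ℝ)^n : ℝ) : ℂ) * t := by push_cast; ring
      rw [show (-(2 * ((2:ℂ)^n * t))) = (((-(2 * (2:ℝ)^n) : ℝ)) : ℂ) * t by push_cast; ring,
        Complex.re_ofReal_mul]
      ring
    have htanh : Tendsto (fun n : ℕ => Complex.tanh ((2:ℂ)^n * t)) atTop (nhds 1) := by
      have hlim : Tendsto (fun n : ℕ =>
          (1 - Complex.exp (-(2 * ((2:ℂ)^n * t)))) / (1 + Complex.exp (-(2 * ((2:ℂ)^n * t)))))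
          atTop (nhds 1) := by
        have := ((tendsto_const_nhds (x := (1:ℂ))).sub hw0).div ((tendsto_const_nhds (x := (1:ℂ))).add hw0)
          (by norm_num : (1:ℂ) + 0 ≠ 0)
        rw [show ((1:ℂ) - 0) / (1 + 0) = 1 by norm_num] at this; exact this
      exact hlim.congr (fun n => (tanh_eq_w (hre n)).symm)
    have hcoth : Tendsto (fun n : ℕ => ccoth ((2:ℂ)^n * t)) atTop (nhds 1) := by
      have hlim : Tendsto (fun n : ℕ =>
          (1 + Complex.exp (-(2 * ((2:ℂ)^n * t)))) / (1 - Complex.exp (-(2 * ((2:ℂ)^n * t)))))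
          atTop (nhds 1) := by
        have := ((tendsto_const_nhds (x := (1:ℂ))).add hw0).div ((tendsto_const_nhds (x := (1:ℂ))).sub hw0)
          (by norm_num : (1:ℂ) - 0 ≠ 0)
        rw [show ((1:ℂ) + 0) / (1 - 0) = 1 by norm_num] at this; exact this
      exact hlim.congr (fun n => (ccoth_eq_w (hre n)).symm)
    have hA : Tendsto (fun n : ℕ => s * Complex.tanh ((2:ℂ)^n * t)) atTop (nhds s) := by
      simpa using (tendsto_const_nhds (x := s)).mul htanh
    have hB : Tendsto (fun n : ℕ => s * ccoth ((2:ℂ)^n * t)) atTop (nhds s) := by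
      simpa using (tendsto_const_nhds (x := s)).mul hcoth
    have hbnd : Tendsto (fun n : ℕ => ‖s * Complex.tanh ((2:ℂ)^n * t) - s‖
        + ‖s * ccoth ((2:ℂ)^n * t) - s‖) atTop (nhds 0) := by
      have := (tendsto_iff_norm_sub_tendsto_zero.mp hA).add
        (tendsto_iff_norm_sub_tendsto_zero.mp hB)
      simpa using this
    rw [tendsto_iff_norm_sub_tendsto_zero]
    apply squeeze_zero (fun n => norm_nonneg _) _ hbnd
    intro n
    rcases key n with ⟨h1, h2⟩ | ⟨h1, h2⟩ <;> first
      | (rw [h1]; exact le_add_of_nonneg_right (norm_nonneg _))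
      | (rw [h1]; exact le_add_of_nonneg_left (norm_nonneg _))
      | (rw [h2]; exact le_add_of_nonneg_right (norm_nonneg _))
      | (rw [h2]; exact le_add_of_nonneg_left (norm_nonneg _))
end

section
/- Let e₁⁽¹⁾, e₂⁽¹⁾, e₁⁽²⁾, e₂⁽²⁾ be complex numbers with the first pair in the open right half-plane and the second pair in the open left half-plane. Define a = √((e₁⁽¹⁾-e₂⁽²⁾)(e₂⁽¹⁾-e₁⁽²⁾)) and b = √((e₁⁽¹⁾-e₁⁽²⁾)(e₂⁽¹⁾-e₂⁽²⁾)) with square roots chosen in the right half-plane. If e₁' = (e₁⁽¹⁾+e₂⁽¹⁾)/2, f₁' = (e₁⁽²⁾+e₂⁽²⁾)/2, and e₂', f₂' are the two roots of [p₁,p₂] = p₁'p₂ - p₁p₂' (where pⱼ is the monic quadratic with the j-th pair of roots) lying in the right and left half-plane respectively, then the updated quantities satisfy b'² = ab (that is, (e₁'-f₁')(e₂'-f₂') squared equals a²b²), i.e., the resultant identity Res(p₁,p₂) = Discr([p₁,p₂])/4 holds. -/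
open Polynomial

lemma pbr_eq (e₁₁ e₂₁ e₁₂ e₂₂ : ℂ) :
    pbr ((X - C e₁₁) * (X - C e₂₁)) ((X - C e₁₂) * (X - C e₂₂)) =
      C ((e₁₁ + e₂₁) - (e₁₂ + e₂₂)) * X ^ 2 + C (2 * (e₁₂ * e₂₂ - e₁₁ * e₂₁)) * X +
        C (e₁₁ * e₂₁ * (e₁₂ + e₂₂) - (e₁₁ + e₂₁) * (e₁₂ * e₂₂)) := by
  simp only [pbr, derivative_mul, derivative_sub, derivative_X, derivative_C, map_mul, map_add,
    map_sub, map_ofNat, map_one]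
  ring

lemma quad_coeff0 (u v : ℂ) : ((X - C u) * (X - C v)).coeff 0 = u * v := by
  simp [mul_comm, coeff_sub, coeff_X]

lemma quad_coeff1 (u v : ℂ) : ((X - C u) * (X - C v)).coeff 1 = -(u + v) := by
  have : (X - C u) * (X - C v) = X ^ 2 - C (u + v) * X + C (u * v) := by
    simp only [map_add, map_mul]; ring
  simp [this, coeff_X_pow]

lemma quad_coeff2 (u v : ℂ) : ((X - C u) * (X - C v)).coeff 2 = 1 := by
  have : (X - C u) * (X - C v) = X ^ 2 - C (u + v) * X + C (u * v) := by
    simp only [map_add, map_mul]; ring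
  simp [this, coeff_X_pow, coeff_X]

theorem agm_step_identity (e₁₁ e₂₁ e₁₂ e₂₂ a b e₂' f₂' : ℂ)
    (h₁₁ : 0 < e₁₁.re) (h₂₁ : 0 < e₂₁.re) (h₁₂ : e₁₂.re < 0) (h₂₂ : e₂₂.re < 0)
    (ha : a ^ 2 = (e₁₁ - e₂₂) * (e₂₁ - e₁₂)) (ha' : 0 < a.re)
    (hb : b ^ 2 = (e₁₁ - e₁₂) * (e₂₁ - e₂₂)) (hb' : 0 < b.re)
    (he₂' : (pbr ((X - C e₁₁) * (X - C e₂₁)) ((X - C e₁₂) * (X - C e₂₂))).IsRoot e₂')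
    (he₂'re : 0 < e₂'.re)
    (hf₂' : (pbr ((X - C e₁₁) * (X - C e₂₁)) ((X - C e₁₂) * (X - C e₂₂))).IsRoot f₂')
    (hf₂'re : f₂'.re < 0) :
    (((e₁₁ + e₂₁) / 2 - (e₁₂ + e₂₂) / 2) * (e₂' - f₂')) ^ 2 = a ^ 2 * b ^ 2 ∧
    pres ((X - C e₁₁) * (X - C e₂₁)) ((X - C e₁₂) * (X - C e₂₂)) =
      pdiscr (pbr ((X - C e₁₁) * (X - C e₂₁)) ((X - C e₁₂) * (X - C e₂₂))) / 4 := by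
  set A : ℂ := (e₁₁ + e₂₁) - (e₁₂ + e₂₂) with hA
  set B : ℂ := 2 * (e₁₂ * e₂₂ - e₁₁ * e₂₁) with hB
  set C₀ : ℂ := e₁₁ * e₂₁ * (e₁₂ + e₂₂) - (e₁₁ + e₂₁) * (e₁₂ * e₂₂) with hC₀
  rw [pbr_eq] at he₂' hf₂'
  have g1 : A * e₂' ^ 2 + B * e₂' + C₀ = 0 := by
    simpa [IsRoot] using he₂'
  have g2 : A * f₂' ^ 2 + B * f₂' + C₀ = 0 := by
    simpa [IsRoot] using hf₂'
  have hne : e₂' - f₂' ≠ 0 := sub_ne_zero.mpr (fun h => by rw [h] at he₂'re; linarith)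
  have hfac : (e₂' - f₂') * (A * (e₂' + f₂') + B) = 0 := by linear_combination g1 - g2
  have hsum : A * (e₂' + f₂') + B = 0 := by
    rcases mul_eq_zero.mp hfac with h | h
    · exact absurd h hne
    · exact h
  have key : (A * (e₂' - f₂')) ^ 2 = B ^ 2 - 4 * A * C₀ := by
    linear_combination (4 * A) * g1 - (3 * A * e₂' - A * f₂' + B) * hsum
  constructor
  · rw [ha, hb]
    linear_combination key / 4
  · rw [pbr_eq]
    simp only [pres, pdiscr, quad_coeff0, quad_coeff1, quad_coeff2, coeff_add, coeff_C_mul,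
      coeff_X_pow, coeff_X, coeff_C]
    norm_num
    ring
end
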